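/- Decrease of Gaussian total correlation under independent per-block noise: for every Hermitian positive definite block matrix N indexed by J and every block-diagonal Hermitian positive semidefinite Φ indexed by J, Σ_{i∈I} log det((N + Φ)_{ii}) − log det(N + Φ) ≤ Σ_{i∈I} log det(N_{ii}) − log det(N). -/

import Mathlib

open Matrix BigOperators Finset ComplexOrder

noncomputable def logDet {p : Type*} [Fintype p] [DecidableEq p] (M : Matrix p p ℂ) : ℝ :=
  Real.log M.det.re

def blk {I : Type*} {n : I → ℕ} (M : Matrix (Σ i, Fin (n i)) (Σ i, Fin (n i)) ℂ) (i : I) :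
    Matrix (Fin (n i)) (Fin (n i)) ℂ :=
  M.submatrix (fun a => ⟨i, a⟩) (fun a => ⟨i, a⟩)

def IsBlockDiag {I : Type*} {n : I → ℕ}
    (M : Matrix (Σ i, Fin (n i)) (Σ i, Fin (n i)) ℂ) : Prop :=
  ∀ a b : Σ i, Fin (n i), a.1 ≠ b.1 → M a b = 0

section auxgen
variable {m p : Type*} [Fintype m] [DecidableEq m] [Fintype p] [DecidableEq p]


lemma posDef_of_det_ne_zero {X : Matrix m m ℂ} (hX : X.PosSemidef) (hd : X.det ≠ 0) :
    X.PosDef := by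
  refine posDef_iff_dotProduct_mulVec.mpr
    ⟨hX.1, fun x hx => lt_of_le_of_ne (hX.dotProduct_mulVec_nonneg x) fun h => ?_⟩
  exact hd (Matrix.exists_mulVec_eq_zero_iff.mp
    ⟨x, hx, (hX.dotProduct_mulVec_zero_iff x).mp h.symm⟩)

lemma one_le_det_one_add {Q : Matrix m m ℂ} (hQ : Q.PosSemidef) :
    (1 : ℂ) ≤ (1 + Q).det := by
  have hH := hQ.1
  have hU : (hH.eigenvectorUnitary : Matrix m m ℂ) * star (hH.eigenvectorUnitary : Matrix m m ℂ)
      = 1 := (Matrix.mem_unitaryGroup_iff).mp hH.eigenvectorUnitary.2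
  have h1 : (1 : Matrix m m ℂ) + Q
      = (hH.eigenvectorUnitary : Matrix m m ℂ)
        * (1 + diagonal (RCLike.ofReal ∘ hH.eigenvalues))
        * star (hH.eigenvectorUnitary : Matrix m m ℂ) := by
    conv_lhs => rw [hH.spectral_theorem, Unitary.conjStarAlgAut_apply, ← hU]
    noncomm_ring
  have hU' : star (hH.eigenvectorUnitary : Matrix m m ℂ) * (hH.eigenvectorUnitary : Matrix m m ℂ)
      = 1 := (Matrix.mem_unitaryGroup_iff').mp hH.eigenvectorUnitary.2
  rw [h1, det_mul, det_mul, mul_comm, ← mul_assoc, ← det_mul, ← det_mul, hU', one_mul]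
  have h2 : (1 : Matrix m m ℂ) + diagonal (RCLike.ofReal ∘ hH.eigenvalues)
      = diagonal (fun i => ((1 + hH.eigenvalues i : ℝ) : ℂ)) := by
    rw [← Matrix.diagonal_one, diagonal_add]
    funext i
    simp
  rw [h2, det_diagonal]
  have : ∏ i, ((1 + hH.eigenvalues i : ℝ) : ℂ) = ((∏ i, (1 + hH.eigenvalues i) : ℝ) : ℂ) := by
    push_cast; ring
  rw [this]
  have h3 : (1 : ℝ) ≤ ∏ i, (1 + hH.eigenvalues i) := by
    have := fun i => hQ.eigenvalues_nonneg i
    calc (1:ℝ) = ∏ _i : m, 1 := by simp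
    _ ≤ ∏ i, (1 + hH.eigenvalues i) :=
      Finset.prod_le_prod (fun i _ => zero_le_one) (fun i _ => by linarith [this i])
  exact_mod_cast h3

open scoped MatrixOrder in
noncomputable def Matrix.PosSemidef.sqrt {A : Matrix m m ℂ} (_hA : A.PosSemidef) :
    Matrix m m ℂ := CFC.sqrt A

open scoped MatrixOrder in
lemma Matrix.PosSemidef.sqrt_mul_self {A : Matrix m m ℂ} (hA : A.PosSemidef) :
    hA.sqrt * hA.sqrt = A := CFC.sqrt_mul_sqrt_self A hA.nonneg

open scoped MatrixOrder in
lemma Matrix.PosSemidef.posSemidef_sqrt {A : Matrix m m ℂ} (hA : A.PosSemidef) :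
    hA.sqrt.PosSemidef := (CFC.sqrt_nonneg A).posSemidef

lemma det_factor {P Ψ : Matrix m m ℂ} (hP : P.PosDef) (hΨ : Ψ.PosSemidef) :
    (P + Ψ).det = P.det * (1 + hΨ.sqrt * P⁻¹ * hΨ.sqrt).det := by
  have hPd : IsUnit P.det := hP.det_pos.ne'.isUnit
  have h1 : P + Ψ = P * (1 + P⁻¹ * Ψ) := by
    rw [mul_add, mul_one, ← mul_assoc, Matrix.mul_nonsing_inv _ hPd, one_mul]
  rw [h1, det_mul]
  congr 1
  conv_lhs => rw [← hΨ.sqrt_mul_self, ← mul_assoc, mul_assoc P⁻¹]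
  rw [← mul_assoc, Matrix.det_one_add_mul_comm, ← mul_assoc]

lemma det_le_det_add {M P : Matrix m m ℂ} (hM : M.PosDef) (hP : P.PosSemidef) :
    M.det ≤ (M + P).det := by
  rw [det_factor hM hP]
  have hpsd : (hP.sqrt * M⁻¹ * hP.sqrt).PosSemidef := by
    have := hM.inv.posSemidef.conjTranspose_mul_mul_same hP.sqrt
    rwa [hP.posSemidef_sqrt.1.eq] at this
  calc M.det = M.det * 1 := (mul_one _).symm
  _ ≤ M.det * (1 + hP.sqrt * M⁻¹ * hP.sqrt).det :=
      mul_le_mul_of_nonneg_left (one_le_det_one_add hpsd) hM.det_pos.le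

lemma inv_sub_inv_posSemidef {X K : Matrix m m ℂ} (hX : X.PosDef) (hK : K.PosSemidef) :
    (X⁻¹ - (X + K)⁻¹).PosSemidef := by
  set T := X + K with hT
  have hTpd : T.PosDef := hX.add_posSemidef hK
  have hXu : IsUnit X.det := hX.det_pos.ne'.isUnit
  have hTu : IsUnit T.det := hTpd.det_pos.ne'.isUnit
  have key : X⁻¹ - T⁻¹ = T⁻¹ * K * T⁻¹ + (K * T⁻¹)ᴴ * X⁻¹ * (K * T⁻¹) := by
    have hKH : Kᴴ = K := hK.1.eq
    have hTH : (T⁻¹)ᴴ = T⁻¹ := hTpd.inv.1.eq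
    rw [conjTranspose_mul, hKH, hTH]
    have h3 : X⁻¹ * (X * T⁻¹) = T⁻¹ := by
      rw [← mul_assoc, Matrix.nonsing_inv_mul _ hXu, one_mul]
    have e1 : T⁻¹ * K * X⁻¹ * K * T⁻¹ + T⁻¹ * K * T⁻¹ = T⁻¹ * K * X⁻¹ := by
      calc T⁻¹ * K * X⁻¹ * K * T⁻¹ + T⁻¹ * K * T⁻¹
          = T⁻¹ * K * (X⁻¹ * (K * T⁻¹)) + T⁻¹ * K * (X⁻¹ * (X * T⁻¹)) := by
            rw [h3]; noncomm_ring
      _ = T⁻¹ * K * X⁻¹ * ((K + X) * T⁻¹) := by noncomm_ring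
      _ = T⁻¹ * K * X⁻¹ := by
            rw [show K + X = T from by rw [hT, add_comm], Matrix.mul_nonsing_inv _ hTu, mul_one]
    have e2 : X⁻¹ - T⁻¹ = T⁻¹ * K * X⁻¹ := by
      have h4 : T⁻¹ * K * X⁻¹ = T⁻¹ * (T * X⁻¹) - T⁻¹ * (X * X⁻¹) := by
        rw [hT]; noncomm_ring
      rw [h4, ← mul_assoc, Matrix.nonsing_inv_mul _ hTu, one_mul,
        Matrix.mul_nonsing_inv _ hXu, mul_one]
    rw [e2]
    conv_lhs => rw [← e1]
    noncomm_ring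
  rw [key]
  refine Matrix.PosSemidef.add ?_ (hX.inv.posSemidef.conjTranspose_mul_mul_same _)
  have := hK.conjTranspose_mul_mul_same T⁻¹
  rwa [hTpd.inv.1.eq] at this

lemma core_ineq {X K Ψ : Matrix m m ℂ} (hX : X.PosDef) (hK : K.PosSemidef)
    (hΨ : Ψ.PosSemidef) :
    X.det * (X + K + Ψ).det ≤ (X + Ψ).det * (X + K).det := by
  set T := X + K with hT
  have hTpd : T.PosDef := hX.add_posSemidef hK
  set s := hΨ.sqrt with hs
  have hsH : sᴴ = s := hΨ.posSemidef_sqrt.1.eq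
  have hG : (s * (X⁻¹ - T⁻¹) * s).PosSemidef := by
    have := (inv_sub_inv_posSemidef hX hK).conjTranspose_mul_mul_same s
    rwa [hsH] at this
  have hG1 : (1 + s * T⁻¹ * s).PosDef := by
    refine Matrix.PosDef.add_posSemidef Matrix.PosDef.one ?_
    have := hTpd.inv.posSemidef.conjTranspose_mul_mul_same s
    rwa [hsH] at this
  have hdet : (1 + s * T⁻¹ * s).det ≤ (1 + s * X⁻¹ * s).det := by
    have h2 : (1 : Matrix m m ℂ) + s * X⁻¹ * s
        = (1 + s * T⁻¹ * s) + s * (X⁻¹ - T⁻¹) * s := by noncomm_ring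
    rw [h2]
    exact det_le_det_add hG1 hG
  calc X.det * (T + Ψ).det = X.det * T.det * (1 + s * T⁻¹ * s).det := by
        rw [det_factor hTpd hΨ]; ring
  _ ≤ X.det * T.det * (1 + s * X⁻¹ * s).det :=
      mul_le_mul_of_nonneg_left hdet (mul_nonneg hX.det_pos.le hTpd.det_pos.le)
  _ = (X + Ψ).det * T.det := by rw [det_factor hX hΨ]; ring



lemma posDef_submatrix_inj {M : Matrix m m ℂ} (hM : M.PosDef) {f : p → m}
    (hf : Function.Injective f) : (M.submatrix f f).PosDef := by
  refine posDef_iff_dotProduct_mulVec.mpr ⟨hM.1.submatrix f, fun x hx => ?_⟩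
  set E : Matrix m p ℂ := (1 : Matrix m m ℂ).submatrix id f with hE
  have hEx : ∀ a, (E *ᵥ x) (f a) = x a := by
    intro a
    simp only [mulVec, dotProduct, hE, submatrix_apply, id_eq, one_apply, hf.eq_iff]
    simp [Finset.sum_ite_eq' Finset.univ a (fun b => x b)]
  have hEx0 : E *ᵥ x ≠ 0 := by
    intro h
    apply hx
    funext a
    have := congrFun h (f a)
    rwa [hEx a] at this
  have hsub : M.submatrix f f = Eᴴ * M * E := by
    rw [(by simp : M = 1 * M * 1), Matrix.submatrix_mul (he₂ := Function.bijective_id),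
      Matrix.submatrix_mul (he₂ := Function.bijective_id), submatrix_id_id]
    simp only [conjTranspose_submatrix, conjTranspose_one, hE]
    congr 1
    · ext a b; simp [one_apply, eq_comm]
  have hq : star x ⬝ᵥ (M.submatrix f f) *ᵥ x = star (E *ᵥ x) ⬝ᵥ M *ᵥ (E *ᵥ x) := by
    rw [hsub, Matrix.mul_assoc, ← mulVec_mulVec, dotProduct_mulVec (star x), ← star_mulVec,
      ← mulVec_mulVec]
  rw [hq]
  exact hM.dotProduct_mulVec_pos hEx0

end auxgen

section aux
variable {m p : Type*} [Fintype m] [DecidableEq m] [Fintype p] [DecidableEq p]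

lemma fromBlocks_step (A : Matrix m m ℂ) (B : Matrix m p ℂ) (D : Matrix p p ℂ)
    (Ψ₁ : Matrix m m ℂ) (hM : (fromBlocks A B Bᴴ D).PosDef) (hΨ : Ψ₁.PosSemidef) :
    (fromBlocks A B Bᴴ D).det * (A + Ψ₁).det ≤ (fromBlocks (A + Ψ₁) B Bᴴ D).det * A.det := by
  have hD : D.PosDef := by
    have h := posDef_submatrix_inj hM (Sum.inr_injective (α := m) (β := p))
    have : (fromBlocks A B Bᴴ D).submatrix (Sum.inr : p → m ⊕ p) Sum.inr = D := by
      ext a b; simp [submatrix_apply, fromBlocks]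
    rwa [this] at h
  letI : Invertible D := Matrix.invertibleOfIsUnitDet D hD.det_pos.ne'.isUnit
  set K := B * D⁻¹ * Bᴴ with hKdef
  have hK : K.PosSemidef := hD.inv.posSemidef.mul_mul_conjTranspose_same B
  have hXpsd : (A - K).PosSemidef := (PosDef.fromBlocks₂₂ A B hD).mp hM.posSemidef
  have hdet1 : (fromBlocks A B Bᴴ D).det = D.det * (A - K).det := det_fromBlocks₂₂ _ _ _ _
  have hXd : (A - K).det ≠ 0 := by
    intro h0
    have := hM.det_pos
    rw [hdet1, h0, mul_zero] at this
    exact lt_irrefl _ this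
  have hX : (A - K).PosDef := posDef_of_det_ne_zero hXpsd hXd
  have hcore := core_ineq hX hK hΨ
  have e1 : A - K + K = A := sub_add_cancel A K
  have e2 : A - K + K + Ψ₁ = A + Ψ₁ := by rw [e1]
  have e3 : A - K + Ψ₁ = A + Ψ₁ - K := sub_add_eq_add_sub A K Ψ₁
  rw [e2, e3, e1] at hcore
  have hdet2 : (fromBlocks (A + Ψ₁) B Bᴴ D).det = D.det * (A + Ψ₁ - K).det :=
    det_fromBlocks₂₂ _ _ _ _
  calc (fromBlocks A B Bᴴ D).det * (A + Ψ₁).det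
      = D.det * ((A - K).det * (A + Ψ₁).det) := by rw [hdet1]; ring
  _ ≤ D.det * ((A + Ψ₁ - K).det * A.det) :=
      mul_le_mul_of_nonneg_left hcore hD.det_pos.le
  _ = (fromBlocks (A + Ψ₁) B Bᴴ D).det * A.det := by rw [hdet2]; ring

end aux

section sigma
variable {I : Type*} [Fintype I] [DecidableEq I] {n : I → ℕ}

/-- the equivalence between `Fin (n j)` and the subtype of the sigma type. -/
def gEquiv (n : I → ℕ) (j : I) : Fin (n j) ≃ {a : Σ i, Fin (n i) // a.1 = j} where
  toFun a := ⟨⟨j, a⟩, rfl⟩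
  invFun x := Fin.cast (congrArg n x.2) x.1.2
  left_inv a := rfl
  right_inv x := by
    rcases x with ⟨⟨i, a⟩, h⟩
    subst h
    rfl

lemma blk_step (M Ψ : Matrix (Σ i, Fin (n i)) (Σ i, Fin (n i)) ℂ)
    (hM : M.PosDef) (hΨ : Ψ.PosSemidef) (j : I)
    (hsupp : ∀ a b : Σ i, Fin (n i), a.1 ≠ j ∨ b.1 ≠ j → Ψ a b = 0) :
    M.det * (blk (M + Ψ) j).det ≤ (M + Ψ).det * (blk M j).det := by
  classical
  set p : (Σ i, Fin (n i)) → Prop := fun a => a.1 = j with hp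
  set e : {a // p a} ⊕ {a // ¬ p a} ≃ (Σ i, Fin (n i)) := Equiv.sumCompl p with he
  set M' := M.submatrix e e with hM'def
  set A := M'.toBlocks₁₁ with hA
  set B := M'.toBlocks₁₂ with hB
  set D := M'.toBlocks₂₂ with hD
  have hM' : M'.PosDef := posDef_submatrix_inj hM e.injective
  have hC : M'.toBlocks₂₁ = Bᴴ := by
    ext a b
    simp only [toBlocks₂₁, of_apply, conjTranspose_apply, hB, toBlocks₁₂]
    exact (hM'.1.apply _ _).symm
  have hMfb : M' = fromBlocks A B Bᴴ D := by
    rw [← hC, hA, hB, hD, fromBlocks_toBlocks]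
  set Ψ' := Ψ.submatrix e e with hΨ'def
  set Ψ₁ := Ψ'.toBlocks₁₁ with hΨ₁
  have h12 : Ψ'.toBlocks₁₂ = 0 := by
    ext a b
    exact hsupp _ _ (Or.inr b.2)
  have h21 : Ψ'.toBlocks₂₁ = 0 := by
    ext a b
    exact hsupp _ _ (Or.inl a.2)
  have h22 : Ψ'.toBlocks₂₂ = 0 := by
    ext a b
    exact hsupp _ _ (Or.inl a.2)
  have hΨfb : Ψ' = fromBlocks Ψ₁ 0 0 0 := by
    rw [← fromBlocks_toBlocks Ψ', h12, h21, h22, hΨ₁]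
  have hΨ₁psd : Ψ₁.PosSemidef := hΨ.submatrix (fun a => e (Sum.inl a))
  have hsum : (M + Ψ).submatrix e e = fromBlocks (A + Ψ₁) B Bᴴ D := by
    have : (M + Ψ).submatrix e e = M' + Ψ' := rfl
    rw [this, hMfb, hΨfb, fromBlocks_add]
    simp
  set g := gEquiv n j with hg
  have hblkM : (blk M j).det = A.det := by
    have : blk M j = A.submatrix g g := by
      ext a b
      simp only [blk, submatrix_apply, hA, toBlocks₁₁, of_apply, hM'def]
      rfl
    rw [this, det_submatrix_equiv_self]
  have hblkMΨ : (blk (M + Ψ) j).det = (A + Ψ₁).det := by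
    have : blk (M + Ψ) j = (A + Ψ₁).submatrix g g := by
      ext a b
      simp only [blk, submatrix_apply, Matrix.add_apply, hA, hΨ₁, toBlocks₁₁, of_apply,
        hM'def, hΨ'def]
      rfl
    rw [this, det_submatrix_equiv_self]
  have hdM : M.det = M'.det := (det_submatrix_equiv_self e M).symm
  have hdMΨ : (M + Ψ).det = (fromBlocks (A + Ψ₁) B Bᴴ D).det := by
    rw [← hsum, det_submatrix_equiv_self]
  have step := fromBlocks_step A B D Ψ₁ (hMfb ▸ hM') hΨ₁psd
  rw [hblkM, hblkMΨ, hdM, hdMΨ, hMfb]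
  exact step
end sigma

section final
variable {I : Type*} [Fintype I] [DecidableEq I] {n : I → ℕ}

lemma re_pos_im_zero {P : Matrix (Σ i, Fin (n i)) (Σ i, Fin (n i)) ℂ} (hP : P.PosDef) :
    0 < P.det.re ∧ P.det.im = 0 := by
  have h := hP.det_pos
  rw [Complex.lt_def] at h
  exact ⟨by simpa using h.1, by simpa using h.2.symm⟩

lemma re_pos_im_zero' {q : ℕ} {P : Matrix (Fin q) (Fin q) ℂ} (hP : P.PosDef) :
    0 < P.det.re ∧ P.det.im = 0 := by
  have h := hP.det_pos
  rw [Complex.lt_def] at h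
  exact ⟨by simpa using h.1, by simpa using h.2.symm⟩

lemma blk_posDef {M : Matrix (Σ i, Fin (n i)) (Σ i, Fin (n i)) ℂ} (hM : M.PosDef) (i : I) :
    (blk M i).PosDef :=
  posDef_submatrix_inj hM (fun a b h => by simpa using h)

lemma logDet_step (M Ψ : Matrix (Σ i, Fin (n i)) (Σ i, Fin (n i)) ℂ)
    (hM : M.PosDef) (hΨ : Ψ.PosSemidef) (j : I)
    (hsupp : ∀ a b : Σ i, Fin (n i), a.1 ≠ j ∨ b.1 ≠ j → Ψ a b = 0) :
    (∑ i : I, logDet (blk (M + Ψ) i)) - logDet (M + Ψ)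
      ≤ (∑ i : I, logDet (blk M i)) - logDet M := by
  have hMΨ : (M + Ψ).PosDef := hM.add_posSemidef hΨ
  have hblkeq : ∀ i ∈ Finset.univ.erase j, logDet (blk (M + Ψ) i) = logDet (blk M i) := by
    intro i hi
    have hij : i ≠ j := (Finset.mem_erase.mp hi).1
    have : blk (M + Ψ) i = blk M i := by
      ext a b
      show M ⟨i, a⟩ ⟨i, b⟩ + Ψ ⟨i, a⟩ ⟨i, b⟩ = M ⟨i, a⟩ ⟨i, b⟩
      rw [hsupp ⟨i, a⟩ ⟨i, b⟩ (Or.inl hij), add_zero]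
    rw [this]
  have hsplit1 : ∑ i : I, logDet (blk (M + Ψ) i)
      = logDet (blk (M + Ψ) j) + ∑ i ∈ Finset.univ.erase j, logDet (blk M i) := by
    rw [← Finset.add_sum_erase _ _ (Finset.mem_univ j)]
    rw [Finset.sum_congr rfl hblkeq]
  have hsplit2 : ∑ i : I, logDet (blk M i)
      = logDet (blk M j) + ∑ i ∈ Finset.univ.erase j, logDet (blk M i) :=
    (Finset.add_sum_erase _ _ (Finset.mem_univ j)).symm
  rw [hsplit1, hsplit2]
  have key := blk_step M Ψ hM hΨ j hsupp
  obtain ⟨hd, hd0⟩ := re_pos_im_zero hM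
  obtain ⟨hb, hb0⟩ := re_pos_im_zero hMΨ
  obtain ⟨ha, ha0⟩ := re_pos_im_zero' (blk_posDef hMΨ j)
  obtain ⟨hc, hc0⟩ := re_pos_im_zero' (blk_posDef hM j)
  rw [Complex.le_def] at key
  have key' : M.det.re * (blk (M + Ψ) j).det.re
      ≤ (M + Ψ).det.re * (blk M j).det.re := by
    have h1 := key.1
    rwa [Complex.mul_re, Complex.mul_re, hd0, hb0, zero_mul, sub_zero, zero_mul, sub_zero] at h1
  have hlog : Real.log ((blk (M + Ψ) j).det.re * M.det.re)
      ≤ Real.log ((blk M j).det.re * (M + Ψ).det.re) := by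
    apply Real.log_le_log (by positivity)
    calc (blk (M + Ψ) j).det.re * M.det.re = M.det.re * (blk (M + Ψ) j).det.re := by ring
    _ ≤ (M + Ψ).det.re * (blk M j).det.re := key'
    _ = (blk M j).det.re * (M + Ψ).det.re := by ring
  rw [Real.log_mul ha.ne' hd.ne', Real.log_mul hc.ne' hb.ne'] at hlog
  simp only [logDet]
  linarith
end final

theorem total_correlation_decreases_under_blockdiag_noise
    {I : Type*} [Fintype I] [DecidableEq I] {n : I → ℕ}
    (N Φ : Matrix (Σ i, Fin (n i)) (Σ i, Fin (n i)) ℂ)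
    (hN : N.PosDef) (hΦ : Φ.PosSemidef) (hΦbd : IsBlockDiag Φ) :
    (∑ i : I, logDet (blk (N + Φ) i)) - logDet (N + Φ)
      ≤ (∑ i : I, logDet (blk N i)) - logDet N := by
  classical
  set DS : Finset I → Matrix (Σ i, Fin (n i)) (Σ i, Fin (n i)) ℂ :=
    fun S => Matrix.diagonal (fun a => if a.1 ∈ S then (1 : ℂ) else 0) with hDS
  set ΦS : Finset I → Matrix (Σ i, Fin (n i)) (Σ i, Fin (n i)) ℂ :=
    fun S => DS S * Φ * DS S with hΦS
  have hDH : ∀ S, (DS S)ᴴ = DS S := by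
    intro S
    have hstar : (star fun a : Σ i, Fin (n i) => if a.fst ∈ S then (1 : ℂ) else 0)
        = (fun a => if a.fst ∈ S then (1 : ℂ) else 0) := by
      funext a
      simp [apply_ite]
    rw [hDS, diagonal_conjTranspose, hstar]
  have hpsd : ∀ S, (ΦS S).PosSemidef := by
    intro S
    have := hΦ.conjTranspose_mul_mul_same (DS S)
    rwa [hDH] at this
  have happly : ∀ S a b, ΦS S a b
      = (if a.1 ∈ S then (1 : ℂ) else 0) * Φ a b * (if b.1 ∈ S then (1 : ℂ) else 0) := by
    intro S a b
    simp only [hΦS, hDS]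
    rw [Matrix.mul_diagonal, Matrix.diagonal_mul]
  have hempty : N + ΦS ∅ = N := by
    ext a b
    rw [Matrix.add_apply, happly]
    simp
  have hfull : ΦS Finset.univ = Φ := by
    ext a b
    rw [happly]
    simp
  have hsingle : ∀ j, ∀ a b : Σ i, Fin (n i), a.1 ≠ j ∨ b.1 ≠ j → ΦS {j} a b = 0 := by
    intro j a b hab
    rw [happly]
    rcases hab with h | h <;> simp [h]
  have hinsert : ∀ (j : I) (S : Finset I), j ∉ S → ΦS (insert j S) = ΦS S + ΦS {j} := by
    intro j S hj
    ext a b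
    rw [Matrix.add_apply, happly, happly, happly]
    by_cases hab : a.1 = b.1
    · rw [← hab]
      by_cases h1 : a.1 = j
      · have h2 : a.1 ∉ S := by rw [h1]; exact hj
        simp [h1, h2, hj]
      · by_cases h3 : a.1 ∈ S <;> simp [h1, h3]
    · rw [hΦbd a b hab]
      ring
  have main : ∀ S : Finset I,
      (∑ i : I, logDet (blk (N + ΦS S) i)) - logDet (N + ΦS S)
        ≤ (∑ i : I, logDet (blk N i)) - logDet N := by
    intro S
    induction S using Finset.induction_on with
    | empty => rw [hempty]
    | @insert j S hj ih =>
      have hstep := logDet_step (N + ΦS S) (ΦS {j}) (hN.add_posSemidef (hpsd S))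
        (hpsd {j}) j (hsingle j)
      have : N + ΦS (insert j S) = N + ΦS S + ΦS {j} := by
        rw [hinsert j S hj, add_assoc]
      rw [this]
      exact le_trans hstep ih
  have := main Finset.univ
  rwa [hfull] at this
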